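/- Let I be a closed unbounded set of ordinals and let B₀ and B₁ be equivalent suitable subsets of I, with σ : B₀ → B₁ the order isomorphism witnessing the equivalence. Then σ preserves I-successor steps: for all β, β' ∈ B₀ with β < β', one has β' = min(I ∖ (β+1)) if and only if σ(β') = min(I ∖ (σ(β)+1)). -/

import Mathlib

open Set

noncomputable section

/-- `l` is a limit point of the set `S` of ordinals: `l > 0` and `sup (S ∩ l) = l`. -/
def IsLimitPoint (S : Set Ordinal) (l : Ordinal) : Prop :=
  0 < l ∧ sSup (S ∩ Iio l) = l

/-- A set of ordinals is closed if it contains all of its limit points. -/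
def IsClosedSet (S : Set Ordinal) : Prop :=
  ∀ l, IsLimitPoint S l → l ∈ S

/-- A set of ordinals is unbounded (in the class of all ordinals). -/
def IsUnboundedSet (S : Set Ordinal) : Prop :=
  ∀ a, ∃ b ∈ S, a < b

/-- `B` is a suitable subset of `I`: it is a countable closed subset of `I`, every member of `B`
which is a limit point of `I` of countable cofinality is a limit point of `B`, and `B` is closed
under immediate predecessors in `I`. -/
def Suitable (I B : Set Ordinal) : Prop :=
  B ⊆ I ∧ B.Countable ∧ IsClosedSet B ∧
  (∀ β ∈ B, IsLimitPoint I β → β.cof ≤ Cardinal.aleph0 → IsLimitPoint B β) ∧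
  (∀ β ∈ B, ∀ m, IsGreatest (I ∩ Iio β) m → m ∈ B)

/-- If `b` is the immediate successor of `a` in `I` and `a ∈ I`, then `b` is not a limit point
of `I`. -/
lemma not_limit_of_isLeast {I : Set Ordinal} {a b : Ordinal} (ha : a ∈ I)
    (h : IsLeast (I ∩ Ioi a) b) : ¬ IsLimitPoint I b := by
  rintro ⟨-, hsup⟩
  have hab : a < b := h.1.2
  have hgr : IsGreatest (I ∩ Iio b) a := by
    refine ⟨⟨ha, hab⟩, fun x hx => ?_⟩
    by_contra hax
    push_neg at hax
    exact absurd (h.2 ⟨hx.1, hax⟩) (not_le.mpr hx.2)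
  rw [hgr.csSup_eq] at hsup
  exact absurd hsup (ne_of_lt hab)

/-- If `a < b` in `I` and `b` is not the least element of `I` above `a`, then either `I ∩ Iio b`
has a greatest element above `a`, or `b` is a limit point of `I`. -/
lemma greatest_or_limit {I : Set Ordinal} (hIcl : IsClosedSet I) {a b : Ordinal}
    (ha : a ∈ I) (hb : b ∈ I) (hab : a < b) (h : ¬ IsLeast (I ∩ Ioi a) b) :
    (∃ m, IsGreatest (I ∩ Iio b) m ∧ a < m) ∨ IsLimitPoint I b := by
  -- get a witness γ ∈ I with a < γ < b
  have hmem : b ∈ I ∩ Ioi a := ⟨hb, hab⟩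
  obtain ⟨γ, hγ, hγb⟩ : ∃ γ ∈ I ∩ Ioi a, γ < b := by
    by_contra hc
    push_neg at hc
    exact h ⟨hmem, hc⟩
  set S : Set Ordinal := I ∩ Iio b with hS
  have hγS : γ ∈ S := ⟨hγ.1, hγb⟩
  have hne : S.Nonempty := ⟨γ, hγS⟩
  have hbdd : BddAbove S := ⟨b, fun x hx => le_of_lt hx.2⟩
  by_cases hgr : ∃ m, IsGreatest S m
  · obtain ⟨m, hm⟩ := hgr
    exact Or.inl ⟨m, hm, lt_of_lt_of_le hγ.2 (hm.2 hγS)⟩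
  · right
    push_neg at hgr
    set lam : Ordinal := sSup S with hlam
    have hγlam : γ ≤ lam := le_csSup hbdd hγS
    have hpos : 0 < lam := lt_of_lt_of_le (lt_of_le_of_lt (zero_le (a := a)) hγ.2) hγlam
    have hlamb : lam ≤ b := csSup_le hne fun x hx => le_of_lt hx.2
    rcases eq_or_lt_of_le hlamb with heq | hlt
    · exact ⟨lt_of_lt_of_le hpos hlamb, heq⟩
    · -- lam < b : derive a contradiction using closedness of I
      exfalso
      have hnotS : lam ∉ S := fun hlS => hgr lam ⟨hlS, fun x hx => le_csSup hbdd hx⟩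
      have hltlam : ∀ x ∈ S, x < lam := fun x hx =>
        lt_of_le_of_ne (le_csSup hbdd hx) (fun he => hnotS (he ▸ hx))
      have hlamI : lam ∈ I := by
        apply hIcl
        refine ⟨hpos, le_antisymm (csSup_le ⟨γ, hγ.1, hltlam γ hγS⟩ fun x hx => le_of_lt hx.2) ?_⟩
        refine le_of_forall_lt fun c hc => ?_
        obtain ⟨t, htS, hct⟩ := exists_lt_of_lt_csSup hne hc
        exact lt_of_lt_of_le hct
          (le_csSup ⟨lam, fun x hx => le_of_lt hx.2⟩ ⟨htS.1, hltlam t htS⟩)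
      exact hgr lam ⟨⟨hlamI, hlt⟩, fun x hx => le_csSup hbdd hx⟩

/-- The order isomorphism between equivalent suitable sets preserves `I`-successor steps. -/
theorem stmt2 (I B₀ B₁ : Set Ordinal) (hIcl : IsClosedSet I) (hIunb : IsUnboundedSet I)
    (h₀ : Suitable I B₀) (h₁ : Suitable I B₁)
    (σ : Ordinal → Ordinal) (hbij : Set.BijOn σ B₀ B₁) (hmono : StrictMonoOn σ B₀)
    (heqv : ∀ β ∈ B₀, (IsLimitPoint I β ↔ IsLimitPoint I (σ β)))
    (β β' : Ordinal) (hβ : β ∈ B₀) (hβ' : β' ∈ B₀) (hlt : β < β') :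
    IsLeast (I ∩ Ioi β) β' ↔ IsLeast (I ∩ Ioi (σ β)) (σ β') := by
  have hσβ : σ β ∈ B₁ := hbij.1 hβ
  have hσβ' : σ β' ∈ B₁ := hbij.1 hβ'
  have hσlt : σ β < σ β' := hmono hβ hβ' hlt
  have hβI : β ∈ I := h₀.1 hβ
  have hβ'I : β' ∈ I := h₀.1 hβ'
  have hσβI : σ β ∈ I := h₁.1 hσβ
  have hσβ'I : σ β' ∈ I := h₁.1 hσβ'
  constructor
  · intro h
    by_contra hc
    rcases greatest_or_limit hIcl hσβI hσβ'I hσlt hc with ⟨m, hm, hσβm⟩ | hlim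
    · -- m ∈ B₁, pull back along σ
      have hmB₁ : m ∈ B₁ := h₁.2.2.2.2 (σ β') hσβ' m hm
      obtain ⟨α, hα, rfl⟩ := hbij.2.2 hmB₁
      have h1 : β < α := (hmono.lt_iff_lt hβ hα).mp hσβm
      have h2 : α < β' := (hmono.lt_iff_lt hα hβ').mp hm.1.2
      exact absurd (h.2 ⟨h₀.1 hα, h1⟩) (not_le.mpr h2)
    · exact not_limit_of_isLeast hβI h ((heqv β' hβ').mpr hlim)
  · intro h
    by_contra hc
    rcases greatest_or_limit hIcl hβI hβ'I hlt hc with ⟨m, hm, hβm⟩ | hlim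
    · have hmB₀ : m ∈ B₀ := h₀.2.2.2.2 β' hβ' m hm
      have h1 : σ β < σ m := hmono hβ hmB₀ hβm
      have h2 : σ m < σ β' := hmono hmB₀ hβ' hm.1.2
      exact absurd (h.2 ⟨h₁.1 (hbij.1 hmB₀), h1⟩) (not_le.mpr h2)
    · exact not_limit_of_isLeast hσβI h ((heqv β' hβ').mp hlim)
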